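/- Let C be the Cayley algebra with norm n over an algebraically closed field of characteristic not 2, and T_B the bi-Cayley Jordan triple system on B = C ⊕ C. A nonzero element x = (x₁,x₂) ∈ B has rank 1 (i.e., Q_x(B) = F·x) if and only if x₂x₁ = 0 and n(x₁) = n(x₂) = 0. -/
import Mathlib


/-- The standard involution of a composition algebra:
`x̄ = n(x,1)·1 - x`, where `n(·,·)` is the polar form of the norm `n`. -/
def ocConj (F : Type) [Field F] (C : Type) [NonAssocRing C] [Module F C]
    (n : QuadraticForm F C) (x : C) : C :=
  QuadraticMap.polar n x 1 • (1 : C) - x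

/-- The quadratic operator of the bi-Cayley Jordan pair / triple system on
`B = C ⊕ C`:
`Q_x(y) = (x₁ȳ₁x₁ + x̄₂(y₂x₁), x₂ȳ₂x₂ + (x₂y₁)x̄₁)`. -/
def biQ (F : Type) [Field F] (C : Type) [NonAssocRing C] [Module F C]
    (n : QuadraticForm F C) (x y : C × C) : C × C :=
  ((x.1 * ocConj F C n y.1) * x.1 + ocConj F C n x.2 * (y.2 * x.1),
   (x.2 * ocConj F C n y.2) * x.2 + (x.2 * y.1) * ocConj F C n x.1)


set_option linter.unusedSectionVars false

open QuadraticMap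

section Aux
variable {F : Type} [Field F] {C : Type} [NonAssocRing C] [Module F C]
  [SMulCommClass F C C] [IsScalarTower F C C] (n : QuadraticForm F C)

lemma smul_one_mul' (s : F) (z : C) : (s • (1:C)) * z = s • z := by
  rw [smul_mul_assoc, one_mul]

lemma mul_smul_one' (s : F) (z : C) : z * (s • (1:C)) = s • z := by
  rw [mul_smul_comm, mul_one]

lemma ocConj_mul (x z : C) : ocConj F C n x * z = polar n x 1 • z - x * z := by
  rw [ocConj, sub_mul, smul_one_mul']

lemma mul_ocConj (x z : C) : z * ocConj F C n x = polar n x 1 • z - z * x := by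
  rw [ocConj, mul_sub, mul_smul_one']

lemma ocConj_add (x y : C) :
    ocConj F C n (x + y) = ocConj F C n x + ocConj F C n y := by
  simp only [ocConj, polar_add_left, add_smul]
  abel

lemma ocConj_zero : ocConj F C n 0 = 0 := by
  simp [ocConj]

variable (hcomp : ∀ x y : C, n (x * y) = n x * n y)

include hcomp

lemma polar_comp_left (x y z : C) :
    polar n (x * y) (x * z) = n x * polar n y z := by
  simp only [polar, ← mul_add, hcomp]
  ring

lemma polar_comp_right (x y z : C) :
    polar n (y * x) (z * x) = polar n y z * n x := by
  simp only [polar, ← add_mul, hcomp]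
  ring

lemma four_lin_left (x w y z : C) :
    polar n (x * y) (w * z) + polar n (w * y) (x * z)
      = polar n x w * polar n y z := by
  have h := polar_comp_left n hcomp (x + w) y z
  have hn : n (x + w) = polar n x w + n x + n w := by
    rw [polar]; ring
  rw [add_mul, add_mul, polar_add_left, polar_add_right, polar_add_right,
    polar_comp_left n hcomp, polar_comp_left n hcomp, hn] at h
  linear_combination h

lemma four_lin_right (x w y z : C) :
    polar n (y * x) (z * w) + polar n (y * w) (z * x)
      = polar n y z * polar n x w := by
  have h := polar_comp_right n hcomp (x + w) y z
  have hn : n (x + w) = polar n x w + n x + n w := by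
    rw [polar]; ring
  rw [mul_add, mul_add, polar_add_left, polar_add_right, polar_add_right,
    polar_comp_right n hcomp, polar_comp_right n hcomp, hn] at h
  linear_combination h

lemma polar_assoc_left (x y z : C) :
    polar n (x * y) z = polar n y (ocConj F C n x * z) := by
  have h := four_lin_left n hcomp x 1 y z
  rw [one_mul, one_mul] at h
  rw [ocConj_mul, polar_sub_right, polar_smul_right, smul_eq_mul]
  linear_combination h

lemma polar_assoc_right (x y z : C) :
    polar n (y * x) z = polar n y (z * ocConj F C n x) := by
  have h := four_lin_right n hcomp x 1 y z
  rw [mul_one, mul_one] at h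
  rw [mul_ocConj, polar_sub_right, polar_smul_right, smul_eq_mul]
  linear_combination h

end Aux

section Aux2
variable {F : Type} [Field F] {C : Type} [NonAssocRing C] [Module F C]
  [SMulCommClass F C C] [IsScalarTower F C C] (n : QuadraticForm F C)
  (hcomp : ∀ x y : C, n (x * y) = n x * n y)
  (hnd : ∀ x : C, (∀ y : C, QuadraticMap.polar n x y = 0) → x = 0)
  (hdim : Module.finrank F C = 8)

include hcomp hnd hdim

lemma n_one : n 1 = 1 := by
  have h := hcomp 1 1
  rw [one_mul] at h
  have h2 : n 1 * (n 1 - 1) = 0 := by linear_combination -h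
  rcases mul_eq_zero.mp h2 with h0 | h0
  · exfalso
    have hz : ∀ x : C, n x = 0 := fun x => by
      have := hcomp x 1; rw [mul_one, h0, mul_zero] at this; exact this
    have : ∀ x : C, x = 0 := fun x => hnd x (fun y => by simp [polar, hz])
    have : Subsingleton C := ⟨fun a b => by rw [this a, this b]⟩
    rw [Module.finrank_zero_of_subsingleton] at hdim
    exact absurd hdim (by norm_num)
  · linear_combination h0

lemma polar_one_one : polar n (1 : C) 1 = 2 := by
  have : ((1 : C) + 1) = (2 : F) • (1 : C) := by
    rw [two_smul]
  rw [polar, this, QuadraticMap.map_smul, n_one n hcomp hnd hdim]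
  norm_num

lemma polar_ocConj_one (x : C) : polar n (ocConj F C n x) 1 = polar n x 1 := by
  rw [ocConj, polar_sub_left, polar_smul_left, polar_one_one n hcomp hnd hdim,
    smul_eq_mul]
  ring

lemma ocConj_ocConj (x : C) : ocConj F C n (ocConj F C n x) = x := by
  show polar n (ocConj F C n x) 1 • (1 : C) - ocConj F C n x = x
  rw [polar_ocConj_one n hcomp hnd hdim, ocConj]
  abel

lemma polar_ocConj_ocConj (x y : C) :
    polar n (ocConj F C n x) (ocConj F C n y) = polar n x y := by
  simp only [ocConj, polar_sub_left, polar_sub_right, polar_smul_left,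
    polar_smul_right, smul_eq_mul]
  rw [polar_one_one n hcomp hnd hdim, polar_comm n (1:C) y]
  ring

lemma mul_mul_ocConj (x z : C) : (z * x) * ocConj F C n x = n x • z := by
  have key : ∀ w, polar n ((z * x) * ocConj F C n x - n x • z) w = 0 := by
    intro w
    rw [polar_sub_left, polar_smul_left,
      polar_assoc_right n hcomp (ocConj F C n x) (z * x) w,
      ocConj_ocConj n hcomp hnd hdim, polar_comp_right n hcomp, smul_eq_mul]
    ring
  exact sub_eq_zero.mp (hnd _ key)

lemma ocConj_mul_mul (x z : C) : ocConj F C n x * (x * z) = n x • z := by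
  have key : ∀ w, polar n (ocConj F C n x * (x * z) - n x • z) w = 0 := by
    intro w
    rw [polar_sub_left, polar_smul_left,
      polar_assoc_left n hcomp (ocConj F C n x) (x * z) w,
      ocConj_ocConj n hcomp hnd hdim, polar_comp_left n hcomp, smul_eq_mul]
    ring
  exact sub_eq_zero.mp (hnd _ key)

lemma key3lin (x y z : C) :
    ocConj F C n x * (y * z) + ocConj F C n y * (x * z)
      = polar n x y • z := by
  have key : ∀ w,
      polar n (ocConj F C n x * (y * z) + ocConj F C n y * (x * z)
        - polar n x y • z) w = 0 := by
    intro w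
    rw [polar_sub_left, polar_add_left, polar_smul_left,
      polar_assoc_left n hcomp (ocConj F C n x) (y * z) w,
      polar_assoc_left n hcomp (ocConj F C n y) (x * z) w,
      ocConj_ocConj n hcomp hnd hdim, ocConj_ocConj n hcomp hnd hdim,
      smul_eq_mul]
    have h4 := four_lin_left n hcomp x y w z
    rw [polar_comm n (y*z) (x*w), polar_comm n (x*z) (y*w),
      polar_comm n z w]
    linear_combination h4
  exact sub_eq_zero.mp (hnd _ key)

lemma key4lin (x y z : C) :
    (z * y) * ocConj F C n x + (z * x) * ocConj F C n y
      = polar n x y • z := by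
  have key : ∀ w,
      polar n ((z * y) * ocConj F C n x + (z * x) * ocConj F C n y
        - polar n x y • z) w = 0 := by
    intro w
    rw [polar_sub_left, polar_add_left, polar_smul_left,
      polar_assoc_right n hcomp (ocConj F C n x) (z * y) w,
      polar_assoc_right n hcomp (ocConj F C n y) (z * x) w,
      ocConj_ocConj n hcomp hnd hdim, ocConj_ocConj n hcomp hnd hdim,
      smul_eq_mul]
    have h4 := four_lin_right n hcomp y x z w
    rw [polar_comm n y x] at h4
    linear_combination h4
  exact sub_eq_zero.mp (hnd _ key)

lemma mul_ocConj_self (x : C) : x * ocConj F C n x = n x • (1 : C) := by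
  have h := mul_mul_ocConj n hcomp hnd hdim x 1
  rwa [one_mul] at h

lemma sq_formula (x y : C) :
    (x * ocConj F C n y) * x = polar n x y • x - n x • y := by
  have h := key4lin n hcomp hnd hdim (ocConj F C n x) (ocConj F C n y) x
  rw [ocConj_ocConj n hcomp hnd hdim, ocConj_ocConj n hcomp hnd hdim,
    polar_ocConj_ocConj n hcomp hnd hdim,
    mul_ocConj_self n hcomp hnd hdim, smul_one_mul'] at h
  linear_combination (norm := module) h

lemma biQ_formula (x y : C × C) :
    biQ F C n x y
      = (polar n x.1 y.1 + polar n x.2 y.2) • x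
        - (n x.1 • y.1 + ocConj F C n y.2 * (x.2 * x.1),
           n x.2 • y.2 + (x.2 * x.1) * ocConj F C n y.1) := by
  have h1 := sq_formula n hcomp hnd hdim x.1 y.1
  have h2 := sq_formula n hcomp hnd hdim x.2 y.2
  have h3 := key3lin n hcomp hnd hdim x.2 y.2 x.1
  have h4 := key4lin n hcomp hnd hdim x.1 y.1 x.2
  have e1 : ocConj F C n x.2 * (y.2 * x.1)
      = polar n x.2 y.2 • x.1 - ocConj F C n y.2 * (x.2 * x.1) := by
    linear_combination (norm := module) h3
  have e2 : (x.2 * y.1) * ocConj F C n x.1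
      = polar n x.1 y.1 • x.2 - (x.2 * x.1) * ocConj F C n y.1 := by
    linear_combination (norm := module) h4
  ext
  · show (x.1 * ocConj F C n y.1) * x.1 + ocConj F C n x.2 * (y.2 * x.1) = _
    rw [h1, e1]
    show _ = (polar n x.1 y.1 + polar n x.2 y.2) • x.1
        - (n x.1 • y.1 + ocConj F C n y.2 * (x.2 * x.1))
    module
  · show (x.2 * ocConj F C n y.2) * x.2 + (x.2 * y.1) * ocConj F C n x.1 = _
    rw [h2, e2]
    show _ = (polar n x.1 y.1 + polar n x.2 y.2) • x.2
        - (n x.2 • y.2 + (x.2 * x.1) * ocConj F C n y.1)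
    module

lemma ocConj_one : ocConj F C n 1 = 1 := by
  rw [ocConj, polar_one_one n hcomp hnd hdim]
  rw [two_smul]
  abel

end Aux2

/-- In the bi-Cayley Jordan triple system on `B = C ⊕ C` over an algebraically
closed field of characteristic not 2, a nonzero element `x = (x₁,x₂)` has
rank 1 (i.e. `Q_x(B) = F·x`) if and only if `x₂x₁ = 0` and
`n(x₁) = n(x₂) = 0`. -/
theorem stmt_16 (F : Type) [Field F] [IsAlgClosed F] (hchar : (2 : F) ≠ 0)
    (C : Type) [NonAssocRing C] [Module F C] [SMulCommClass F C C] [IsScalarTower F C C]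
    (n : QuadraticForm F C)
    (hcomp : ∀ x y : C, n (x * y) = n x * n y)
    (hnd : ∀ x : C, (∀ y : C, QuadraticMap.polar n x y = 0) → x = 0)
    (hdim : Module.finrank F C = 8)
    (x : C × C) (hx : x ≠ 0) :
    ({z : C × C | ∃ y : C × C, biQ F C n x y = z}
        = {z : C × C | ∃ c : F, z = c • x})
      ↔ (x.2 * x.1 = 0 ∧ n x.1 = 0 ∧ n x.2 = 0) := by

  constructor
  · intro h
    have hR : ∀ y : C × C, ∃ d : F,
        n x.1 • y.1 + ocConj F C n y.2 * (x.2 * x.1) = d • x.1 ∧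
        n x.2 • y.2 + (x.2 * x.1) * ocConj F C n y.1 = d • x.2 := by
      intro y
      have hy : biQ F C n x y ∈ {z : C × C | ∃ c : F, z = c • x} := by
        rw [← h]; exact ⟨y, rfl⟩
      obtain ⟨c, hc⟩ := hy
      refine ⟨polar n x.1 y.1 + polar n x.2 y.2 - c, ?_, ?_⟩
      · have hf := congrArg Prod.fst (biQ_formula n hcomp hnd hdim x y)
        rw [hc] at hf
        simp only [Prod.fst_sub, Prod.smul_fst, Prod.fst_add] at hf
        rw [sub_smul]
        linear_combination (norm := module) hf
      · have hf := congrArg Prod.snd (biQ_formula n hcomp hnd hdim x y)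
        rw [hc] at hf
        simp only [Prod.snd_sub, Prod.smul_snd, Prod.snd_add] at hf
        rw [sub_smul]
        linear_combination (norm := module) hf
    have hn1 : n x.1 = 0 := by
      by_contra hne
      have hall : ∀ u : C, ∃ r : F, r • x.1 = u := by
        intro u
        obtain ⟨d, hd1, -⟩ := hR (u, 0)
        rw [ocConj_zero, zero_mul, add_zero] at hd1
        refine ⟨(n x.1)⁻¹ * d, ?_⟩
        rw [mul_smul, ← hd1, smul_smul, inv_mul_cancel₀ hne, one_smul]
      have hrank : Module.rank F C ≤ 1 := rank_le_one_iff.mpr ⟨x.1, hall⟩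
      have hfr : Module.finrank F C ≤ 1 := by
        apply Module.finrank_le_of_rank_le
        exact_mod_cast hrank
      omega
    have hn2 : n x.2 = 0 := by
      by_contra hne
      have hall : ∀ u : C, ∃ r : F, r • x.2 = u := by
        intro u
        obtain ⟨d, -, hd2⟩ := hR (0, u)
        rw [ocConj_zero, mul_zero, add_zero] at hd2
        refine ⟨(n x.2)⁻¹ * d, ?_⟩
        rw [mul_smul, ← hd2, smul_smul, inv_mul_cancel₀ hne, one_smul]
      have hrank : Module.rank F C ≤ 1 := rank_le_one_iff.mpr ⟨x.2, hall⟩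
      have hfr : Module.finrank F C ≤ 1 := by
        apply Module.finrank_le_of_rank_le
        exact_mod_cast hrank
      omega
    have ha : x.2 * x.1 = 0 := by
      by_contra hane
      obtain ⟨d, hd1, hd2⟩ := hR (1, 0)
      simp only [hn1, hn2, zero_smul, zero_add, add_zero, zero_mul, mul_zero,
        ocConj_zero, ocConj_one n hcomp hnd hdim, mul_one, smul_zero] at hd1 hd2
      -- hd1 : 0 = d • x.1, hd2 : x.2 * x.1 = d • x.2
      have hdne : d ≠ 0 := by
        intro h0
        rw [h0, zero_smul] at hd2
        exact hane hd2
      have hx1 : x.1 = 0 := by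
        have := hd1.symm
        rcases smul_eq_zero.mp this with h0 | h0
        · exact absurd h0 hdne
        · exact h0
      exact hane (by rw [hx1, mul_zero])
    exact ⟨ha, hn1, hn2⟩
  · rintro ⟨ha, h1, h2⟩
    have hform : ∀ y : C × C, biQ F C n x y
        = (polar n x.1 y.1 + polar n x.2 y.2) • x := by
      intro y
      rw [biQ_formula n hcomp hnd hdim x y, ha, h1, h2]
      simp only [zero_smul, mul_zero, zero_mul, add_zero, zero_add]
      rw [Prod.mk_zero_zero, sub_zero]
    ext z
    simp only [Set.mem_setOf_eq]
    constructor
    · rintro ⟨y, rfl⟩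
      exact ⟨polar n x.1 y.1 + polar n x.2 y.2, by rw [hform]⟩
    · rintro ⟨c, rfl⟩
      have hcases : x.1 ≠ 0 ∨ x.2 ≠ 0 := by
        by_contra hcon
        push_neg at hcon
        exact hx (Prod.ext hcon.1 hcon.2)
      rcases hcases with hne | hne
      · obtain ⟨u, hu⟩ : ∃ u : C, polar n x.1 u ≠ 0 := by
          by_contra hcon
          push_neg at hcon
          exact hne (hnd _ hcon)
        refine ⟨((c / polar n x.1 u) • u, 0), ?_⟩
        rw [hform]
        congr 1
        rw [polar_zero_right, add_zero, polar_smul_right, smul_eq_mul]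
        field_simp
      · obtain ⟨u, hu⟩ : ∃ u : C, polar n x.2 u ≠ 0 := by
          by_contra hcon
          push_neg at hcon
          exact hne (hnd _ hcon)
        refine ⟨(0, (c / polar n x.2 u) • u), ?_⟩
        rw [hform]
        congr 1
        rw [polar_zero_right, zero_add, polar_smul_right, smul_eq_mul]
        field_simp
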